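/- If V : ℕ × ℕ → ℝ is coordinatewise nondecreasing and submodular, then for all (a,b) ∈ ℕ × ℕ with a ≥ b: if Q_sense V (a,b) > Q_comm V (a,b) (communication is strictly optimal at (a,b)), then Q_sense V (a+1,b) > Q_comm V (a+1,b); and if Q_sense V (a,b) ≤ Q_comm V (a,b) (sensing is optimal at (a,b)), then Q_sense V (a,b+1) ≤ Q_comm V (a,b+1). That is, the communication region is closed under increasing the source age and the sensing region is closed under increasing the base-station age, within the region a ≥ b. -/

import Mathlib

noncomputable def Qsense (γ lams cs : ℝ) (V : ℕ × ℕ → ℝ) (p : ℕ × ℕ) : ℝ :=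
  (p.1 : ℝ) + cs + γ * (lams * V (p.1 + 1, 1) + (1 - lams) * V (p.1 + 1, p.2 + 1))

noncomputable def Qcomm (γ lamc cc : ℝ) (V : ℕ × ℕ → ℝ) (p : ℕ × ℕ) : ℝ :=
  (p.1 : ℝ) + cc + γ * (lamc * V (p.2 + 1, p.2 + 1) + (1 - lamc) * V (p.1 + 1, p.2 + 1))

noncomputable def Delta (γ lams lamc cs cc : ℝ) (V : ℕ × ℕ → ℝ) (p : ℕ × ℕ) : ℝ :=
  Qsense γ lams cs V p - Qcomm γ lamc cc V p

noncomputable def Tbell (γ lams lamc cs cc : ℝ) (V : ℕ × ℕ → ℝ) : ℕ × ℕ → ℝ :=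
  fun p => min (Qsense γ lams cs V p) (Qcomm γ lamc cc V p)

/-- `V` is nondecreasing in each argument separately. -/
def CoordNondecr (V : ℕ × ℕ → ℝ) : Prop :=
  (∀ a a' b : ℕ, a ≤ a' → V (a, b) ≤ V (a', b)) ∧
  (∀ a b b' : ℕ, b ≤ b' → V (a, b) ≤ V (a, b'))

/-- Submodularity on the lattice `ℕ × ℕ` (componentwise max/min). -/
def Submodular (W : ℕ × ℕ → ℝ) : Prop :=
  ∀ x y : ℕ × ℕ, W (x ⊔ y) + W (x ⊓ y) ≤ W x + W y

/-- Within the region `a ≥ b`, the communication region is closed under increasing the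
source age and the sensing region is closed under increasing the base-station age. -/
theorem regions_closed_under_age_increase
    (γ lams lamc cs cc : ℝ)
    (hγ0 : 0 < γ) (hγ1 : γ < 1) (hs0 : 0 ≤ lams) (hsc : lams ≤ lamc) (hc1 : lamc ≤ 1)
    (hcs : 0 ≤ cs) (hcc : 0 ≤ cc)
    (V : ℕ × ℕ → ℝ) (hmono : CoordNondecr V) (hsub : Submodular V) :
    ∀ a b : ℕ, b ≤ a →
      ((Qcomm γ lamc cc V (a, b) < Qsense γ lams cs V (a, b) →
        Qcomm γ lamc cc V (a + 1, b) < Qsense γ lams cs V (a + 1, b)) ∧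
       (Qsense γ lams cs V (a, b) ≤ Qcomm γ lamc cc V (a, b) →
        Qsense γ lams cs V (a, b + 1) ≤ Qcomm γ lamc cc V (a, b + 1))) := by

  obtain ⟨hm1, hm2⟩ := hmono
  intro a b hba
  constructor
  · intro h
    simp only [Qsense, Qcomm] at *
    have e1 : V (a + 1, 1) ≤ V (a + 1 + 1, 1) := hm1 _ _ _ (by omega)
    have e2 : V (a + 1, b + 1) ≤ V (a + 1 + 1, b + 1) := hm1 _ _ _ (by omega)
    push_cast
    push_cast at h
    nlinarith [mul_nonneg (mul_nonneg hγ0.le hs0) (sub_nonneg.2 e1),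
      mul_nonneg (mul_nonneg hγ0.le (sub_nonneg.2 hsc)) (sub_nonneg.2 e2)]
  · intro h
    have hc0 : 0 ≤ lamc := le_trans hs0 hsc
    -- D : second-coordinate increment at (a+1, b+1)
    have hD0 : 0 ≤ V (a + 1, b + 1 + 1) - V (a + 1, b + 1) :=
      sub_nonneg.2 (hm2 _ _ _ (by omega))
    have hD'0 : 0 ≤ V (b + 1 + 1, b + 1 + 1) - V (b + 1, b + 1) := by
      have := hm1 (b+1) (b+2) (b+2) (by omega)
      have := hm2 (b+1) (b+1) (b+2) (by omega)
      have h3 : V (b + 1 + 1, b + 1 + 1) = V (b+2, b+2) := by norm_num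
      have h4 : V (b+1, b+1+1) = V (b+1, b+2) := by norm_num
      linarith [h3, h4]
    have hkey : V (a + 1, b + 1 + 1) - V (a + 1, b + 1)
        ≤ V (b + 1 + 1, b + 1 + 1) - V (b + 1, b + 1) := by
      rcases le_or_gt (a + 1) (b + 2) with hle | hlt
      · have h1 : V (a + 1, b + 1 + 1) ≤ V (b + 1 + 1, b + 1 + 1) := by
          have := hm1 (a+1) (b+2) (b+2) hle
          have : V (a+1, b+2) ≤ V (b+2, b+2) := this
          have hx : V (a + 1, b + 1 + 1) = V (a+1, b+2) := by norm_num
          have hy : V (b + 1 + 1, b + 1 + 1) = V (b+2, b+2) := by norm_num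
          linarith [hx, hy]
        have h2 : V (b + 1, b + 1) ≤ V (a + 1, b + 1) := hm1 _ _ _ (by omega)
        linarith
      · have hsup : ((a+1, b+1) : ℕ × ℕ) ⊔ (b+2, b+2) = (a+1, b+2) := by
          simp [Prod.ext_iff]; omega
        have hinf : ((a+1, b+1) : ℕ × ℕ) ⊓ (b+2, b+2) = (b+2, b+1) := by
          simp [Prod.ext_iff]; omega
        have hsm := hsub (a+1, b+1) (b+2, b+2)
        rw [hsup, hinf] at hsm
        have h2 : V (b+1, b+1) ≤ V (b+2, b+1) := hm1 _ _ _ (by omega)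
        have hx : V (a + 1, b + 1 + 1) = V (a+1, b+2) := by norm_num
        have hy : V (b + 1 + 1, b + 1 + 1) = V (b+2, b+2) := by norm_num
        linarith [hx, hy]
    have hmain : (lamc - lams) * (V (a + 1, b + 1 + 1) - V (a + 1, b + 1))
        ≤ lamc * (V (b + 1 + 1, b + 1 + 1) - V (b + 1, b + 1)) := by
      nlinarith [mul_nonneg hs0 hD0]
    simp only [Qsense, Qcomm] at *
    push_cast
    push_cast at h
    nlinarith [mul_le_mul_of_nonneg_left hmain hγ0.le]
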